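/- In the classical (h = 0, fully commutative) setting, for M×N matrices X = (x_{ij}) and P = (p_{ij}) with commuting entries, diagonal matrices Z = diag(z_1,…,z_N), Λ = diag(λ_1,…,λ_M), and scalars u, p_u: ∏_{a=1}^N (u − z_a) · det( (p_u − λ_i)δ_{ij} − Σ_{a=1}^N x_{ja}p_{ia}/(u − z_a) )_{i,j=1}^M = Σ_{A,B, |A|=|B|} (−1)^{|A|} ∏_{a∉B}(u − z_a) ∏_{b∉A}(p_u − λ_b) · det(x_{ab})_{a∈A,b∈B} · det(p_{ab})_{a∈A,b∈B}, where A ranges over subsets of {1,…,M} and B over subsets of {1,…,N} of equal cardinality. -/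

import Mathlib

open scoped BigOperators

section Aux

variable {R : Type*} [CommRing R]

lemma capelliAux_prod_disjSum {α β M' : Type*} [CommMonoid M'] (s : Finset α) (t : Finset β)
    (f : α ⊕ β → M') :
    ∏ x ∈ s.disjSum t, f x = (∏ a ∈ s, f (Sum.inl a)) * ∏ b ∈ t, f (Sum.inr b) := by
  rw [← Finset.map_inl_disjUnion_map_inr, Finset.prod_disjUnion, Finset.prod_map,
    Finset.prod_map]
  rfl

lemma capelliAux_compl_disjSum {α β : Type*} [Fintype α] [Fintype β] [DecidableEq α]
    [DecidableEq β] (s : Finset α) (t : Finset β) :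
    (s.disjSum t)ᶜ = sᶜ.disjSum tᶜ := by
  ext x
  cases x <;> simp

def capelliAux_disjSumEquiv {α β : Type*} (s : Finset α) (t : Finset β) :
    (↥s ⊕ ↥t) ≃ ↥(s.disjSum t) where
  toFun := Sum.elim (fun a => ⟨.inl a, Finset.inl_mem_disjSum.2 a.2⟩)
    (fun b => ⟨.inr b, Finset.inr_mem_disjSum.2 b.2⟩)
  invFun := fun x => match x with
    | ⟨.inl a, h⟩ => .inl ⟨a, Finset.inl_mem_disjSum.1 h⟩
    | ⟨.inr b, h⟩ => .inr ⟨b, Finset.inr_mem_disjSum.1 h⟩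
  left_inv := by rintro (a | b) <;> rfl
  right_inv := by rintro ⟨(a | b), h⟩ <;> rfl

def capelliAux_finsetBoolEquiv {ι : Type*} [DecidableEq ι] [Fintype ι] :
    Finset ι ≃ (ι → Bool) where
  toFun S i := decide (i ∈ S)
  invFun r := Finset.univ.filter fun i => r i = true
  left_inv S := by ext i; simp
  right_inv r := by funext i; simp

def capelliAux_finsetSumEquiv (α β : Type*) : Finset α × Finset β ≃ Finset (α ⊕ β) where
  toFun P := P.1.disjSum P.2
  invFun S := (S.toLeft, S.toRight)
  left_inv P := by ext1 <;> simp
  right_inv S := Finset.toLeft_disjSum_toRight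

lemma capelliAux_det_rows_ite_single {ι : Type*} [Fintype ι] [DecidableEq ι]
    (E : Matrix ι ι R) (S : Finset ι) :
    Matrix.det (Matrix.of fun i j => if i ∈ S then E i j else (Pi.single i (1 : R) : ι → R) j) =
      Matrix.det (E.submatrix (fun a : ↥S => (a : ι)) (fun a : ↥S => (a : ι))) := by
  classical
  rw [← Matrix.det_submatrix_equiv_self (Equiv.sumCompl (· ∈ S))]
  have hM : (Matrix.of fun i j => if i ∈ S then E i j else (Pi.single i (1 : R) : ι → R) j).submatrix
        (Equiv.sumCompl (· ∈ S)) (Equiv.sumCompl (· ∈ S)) =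
      Matrix.fromBlocks (E.submatrix (fun a : ↥S => (a : ι)) (fun a : ↥S => (a : ι)))
        (Matrix.of fun (a : ↥S) (b : {x // x ∉ S}) => E (a : ι) (b : ι)) 0 1 := by
    ext i j
    cases i with
    | inl a =>
      cases j with
      | inl b => simp [a.2]
      | inr b => simp [a.2]
    | inr a =>
      cases j with
      | inl b =>
        simp only [Matrix.submatrix_apply, Equiv.sumCompl_apply_inr, Equiv.sumCompl_apply_inl,
          Matrix.of_apply, if_neg a.2, Matrix.fromBlocks_apply₂₁, Matrix.zero_apply]
        rw [Pi.single_apply, if_neg]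
        exact fun h => a.2 (h ▸ b.2)
      | inr b =>
        simp only [Matrix.submatrix_apply, Equiv.sumCompl_apply_inr, Matrix.of_apply,
          if_neg a.2, Matrix.fromBlocks_apply₂₂]
        rw [Pi.single_apply, Matrix.one_apply]
        by_cases h : a = b
        · simp [h]
        · rw [if_neg (Ne.symm ?_), if_neg h]
          exact fun hh => h (Subtype.ext hh)
  rw [hM, Matrix.det_fromBlocks_zero₂₁, Matrix.det_one, mul_one]

lemma capelliAux_det_diagonal_add {ι : Type*} [Fintype ι] [DecidableEq ι] (d : ι → R)
    (E : Matrix ι ι R) :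
    Matrix.det (Matrix.diagonal d + E) =
      ∑ S : Finset ι, (∏ i ∈ Sᶜ, d i) *
        Matrix.det (E.submatrix (fun a : ↥S => (a : ι)) (fun a : ↥S => (a : ι))) := by
  classical
  have hrow : (Matrix.diagonal d + E) =
      fun i => ∑ b : Bool, (if b then E i else Pi.single i (d i)) := by
    funext i j
    rw [Fintype.sum_bool]
    by_cases h : i = j
    · subst h; simp [Matrix.add_apply, Matrix.diagonal_apply, Pi.single_apply, add_comm]
    · simp [Matrix.add_apply, Matrix.diagonal_apply, h, Pi.single_apply, Ne.symm h]
  have h1 : Matrix.det (Matrix.diagonal d + E) =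
      ∑ r : ι → Bool, Matrix.detRowAlternating
        (fun i => if r i then E i else Pi.single i (d i)) := by
    show Matrix.detRowAlternating (Matrix.diagonal d + E) = _
    rw [hrow]
    exact (Matrix.detRowAlternating (R := R) (n := ι)).toMultilinearMap.map_sum
      (fun i (b : Bool) => if b then E i else Pi.single i (d i))
  have h2 : (∑ r : ι → Bool, Matrix.detRowAlternating
        (fun i => if r i then E i else Pi.single i (d i))) =
      ∑ S : Finset ι, Matrix.detRowAlternating
        (fun i => if i ∈ S then E i else Pi.single i (d i)) := by
    refine (Fintype.sum_equiv (capelliAux_finsetBoolEquiv (ι := ι)) _ _ fun S => ?_).symm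
    congr 1
    funext i
    simp [capelliAux_finsetBoolEquiv]
  rw [h1, h2]
  refine Finset.sum_congr rfl fun S _ => ?_
  have hfac : (fun i => if i ∈ S then E i else Pi.single i (d i)) =
      Matrix.of (fun i j => (if i ∈ S then 1 else d i) *
        (Matrix.of fun i j => if i ∈ S then E i j else (Pi.single i (1 : R) : ι → R) j) i j) := by
    funext i j
    by_cases h : i ∈ S
    · simp [h]
    · simp [h, Pi.single_apply, mul_ite]
  show Matrix.det _ = _
  rw [hfac, Matrix.det_mul_column, capelliAux_det_rows_ite_single]
  congr 1
  rw [← Finset.prod_compl_mul_prod S]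
  rw [Finset.prod_congr rfl (fun i hi => if_neg (Finset.mem_compl.1 hi)),
    Finset.prod_congr rfl (fun i hi => if_pos hi)]
  simp

end Aux


lemma capelliAux_det_J {R : Type*} [CommRing R] (k : ℕ) :
    Matrix.det (Matrix.fromBlocks (0 : Matrix (Fin k) (Fin k) R) (1 : Matrix (Fin k) (Fin k) R)
      (1 : Matrix (Fin k) (Fin k) R) (0 : Matrix (Fin k) (Fin k) R)) = (-1 : R) ^ k := by
  have hfac : (Matrix.fromBlocks (0 : Matrix (Fin k) (Fin k) R) (1 : Matrix (Fin k) (Fin k) R)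
        (1 : Matrix (Fin k) (Fin k) R) (0 : Matrix (Fin k) (Fin k) R)) =
      Matrix.fromBlocks 1 1 0 1 * Matrix.fromBlocks 1 0 (-1) 1 *
        Matrix.fromBlocks (-1) 1 0 1 := by
    rw [Matrix.fromBlocks_multiply, Matrix.fromBlocks_multiply]
    congr 1 <;> simp
  rw [hfac, Matrix.det_mul, Matrix.det_mul, Matrix.det_fromBlocks_zero₂₁,
    Matrix.det_fromBlocks_zero₁₂, Matrix.det_fromBlocks_zero₂₁, Matrix.det_one,
    Matrix.det_neg, Matrix.det_one]
  simp

lemma capelliAux_det_offdiag {R : Type*} [CommRing R] {k : ℕ}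
    (Y P : Matrix (Fin k) (Fin k) R) :
    Matrix.det (Matrix.fromBlocks 0 Y P 0) = (-1 : R) ^ k * Matrix.det Y * Matrix.det P := by
  have hfac : Matrix.fromBlocks (0 : Matrix (Fin k) (Fin k) R) Y P 0 =
      Matrix.fromBlocks (0 : Matrix (Fin k) (Fin k) R) (1 : Matrix (Fin k) (Fin k) R)
        (1 : Matrix (Fin k) (Fin k) R) (0 : Matrix (Fin k) (Fin k) R) *
        Matrix.fromBlocks P 0 0 Y := by
    rw [Matrix.fromBlocks_multiply]
    simp
  rw [hfac, Matrix.det_mul, capelliAux_det_J, Matrix.det_fromBlocks_zero₁₂]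
  ring

lemma capelliAux_det_offdiag_zero_aux {K : Type*} [Field K] {m n : Type*} [Fintype m]
    [Fintype n] [DecidableEq m] [DecidableEq n] (hlt : Fintype.card m < Fintype.card n)
    (Y : Matrix m n K) (P : Matrix n m K) :
    Matrix.det (Matrix.fromBlocks 0 Y P 0) = 0 := by
  rw [← Matrix.exists_vecMul_eq_zero_iff]
  have hli : ¬ LinearIndependent K (fun a : n => P a) := by
    intro hl
    have h1 := hl.fintype_card_le_finrank
    rw [Module.finrank_fintype_fun_eq_card] at h1
    omega
  obtain ⟨g, hg0, a₀, ha₀⟩ := Fintype.not_linearIndependent_iff.mp hli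
  refine ⟨Sum.elim 0 g, ?_, ?_⟩
  · intro h0
    exact ha₀ (by simpa using congrFun h0 (Sum.inr a₀))
  · funext c
    cases c with
    | inl b =>
      have := congrFun hg0 b
      simp only [Finset.sum_apply, Pi.smul_apply, smul_eq_mul, Pi.zero_apply] at this
      simp [Matrix.vecMul, dotProduct, Fintype.sum_sum_type, this]
    | inr b =>
      simp [Matrix.vecMul, dotProduct, Fintype.sum_sum_type]

lemma capelliAux_det_offdiag_zero {K : Type*} [Field K] {m n : Type*} [Fintype m]
    [Fintype n] [DecidableEq m] [DecidableEq n] (hne : Fintype.card m ≠ Fintype.card n)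
    (Y : Matrix m n K) (P : Matrix n m K) :
    Matrix.det (Matrix.fromBlocks 0 Y P 0) = 0 := by
  rcases lt_or_gt_of_ne hne with h | h
  · exact capelliAux_det_offdiag_zero_aux h Y P
  · have hswap : Matrix.det (Matrix.fromBlocks (0 : Matrix m m K) Y P 0) =
        Matrix.det (Matrix.fromBlocks (0 : Matrix n n K) P Y 0) := by
      rw [← Matrix.det_submatrix_equiv_self (Equiv.sumComm m n)
        (Matrix.fromBlocks (0 : Matrix n n K) P Y 0)]
      congr 1
      have : ⇑(Equiv.sumComm m n) = Sum.swap := rfl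
      rw [this, Matrix.fromBlocks_submatrix_sum_swap_sum_swap]
    rw [hswap]
    exact capelliAux_det_offdiag_zero_aux h P Y



/-- The `h = 0` (fully commutative) case of the generalized Capelli identity:
`∏_a (u − z_a) · det((p_u − λ_i)δ_{ij} − Σ_a x_{ja}p_{ia}/(u − z_a))
 = Σ_{A,B,|A|=|B|} (−1)^{|A|} ∏_{a∉B}(u − z_a) ∏_{b∉A}(p_u − λ_b)
   · det(x_{ab})_{A,B} · det(p_{ab})_{A,B}`. -/
theorem generalized_capelli_commutative {M N : ℕ} {K : Type*} [Field K]
    (u pu : K) (z : Fin N → K) (lam : Fin M → K) (x p : Fin M → Fin N → K)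
    (hu : ∀ a, u ≠ z a) :
    (∏ a, (u - z a)) *
      Matrix.det (Matrix.of fun i j : Fin M =>
        (if i = j then pu - lam i else 0) - ∑ a, x j a * p i a / (u - z a)) =
    ∑ A : Finset (Fin M), ∑ B : Finset (Fin N),
      if h : B.card = A.card then
        (-1) ^ A.card * (∏ a ∈ Bᶜ, (u - z a)) * (∏ b ∈ Aᶜ, (pu - lam b)) *
          Matrix.det (Matrix.of fun i j : Fin A.card =>
            x (A.orderEmbOfFin rfl i) (B.orderEmbOfFin h j)) *
          Matrix.det (Matrix.of fun i j : Fin A.card =>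
            p (A.orderEmbOfFin rfl i) (B.orderEmbOfFin h j))
      else 0 := by
  classical
  have hdet : IsUnit (Matrix.diagonal fun a => u - z a).det := by
    rw [Matrix.det_diagonal]
    exact isUnit_iff_ne_zero.2 (Finset.prod_ne_zero_iff.2 fun a _ => sub_ne_zero.2 (hu a))
  letI : Invertible (Matrix.diagonal fun a => u - z a) :=
    (Matrix.diagonal fun a => u - z a).invertibleOfIsUnitDet hdet
  have hinv : (⅟(Matrix.diagonal fun a => u - z a)) =
      Matrix.diagonal fun a => (u - z a)⁻¹ := by
    refine invOf_eq_right_inv ?_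
    rw [Matrix.diagonal_mul_diagonal]
    have hone : (fun a => (u - z a) * (u - z a)⁻¹) = fun _ => (1 : K) := by
      funext a
      exact mul_inv_cancel₀ (sub_ne_zero.2 (hu a))
    rw [hone, Matrix.diagonal_one]
  have hmat : (Matrix.of fun i j : Fin M =>
        (if i = j then pu - lam i else 0) - ∑ a, x j a * p i a / (u - z a)) =
      Matrix.diagonal (fun i => pu - lam i) -
        (Matrix.of fun (i : Fin M) (a : Fin N) => p i a) *
          ⅟(Matrix.diagonal fun a => u - z a) *
          (Matrix.of fun (a : Fin N) (i : Fin M) => x i a) := by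
    rw [hinv]
    ext i j
    simp only [Matrix.of_apply, Matrix.sub_apply, Matrix.diagonal_apply, Matrix.mul_apply,
      mul_ite, mul_zero, ite_mul, zero_mul, Finset.sum_ite_eq', Finset.mem_univ, if_true]
    congr 1
    refine Finset.sum_congr rfl fun a _ => ?_
    rw [div_eq_mul_inv]
    ring
  have h1 : (∏ a, (u - z a)) *
      Matrix.det (Matrix.of fun i j : Fin M =>
        (if i = j then pu - lam i else 0) - ∑ a, x j a * p i a / (u - z a)) =
      Matrix.det (Matrix.fromBlocks (Matrix.diagonal fun a => u - z a)
        (Matrix.of fun (a : Fin N) (i : Fin M) => x i a)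
        (Matrix.of fun (i : Fin M) (a : Fin N) => p i a)
        (Matrix.diagonal fun i => pu - lam i)) := by
    rw [Matrix.det_fromBlocks₁₁, Matrix.det_diagonal, hmat]
  have h2 : Matrix.fromBlocks (Matrix.diagonal fun a => u - z a)
        (Matrix.of fun (a : Fin N) (i : Fin M) => x i a)
        (Matrix.of fun (i : Fin M) (a : Fin N) => p i a)
        (Matrix.diagonal fun i => pu - lam i) =
      Matrix.diagonal (Sum.elim (fun a => u - z a) (fun i => pu - lam i)) +
        Matrix.fromBlocks 0 (Matrix.of fun (a : Fin N) (i : Fin M) => x i a)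
          (Matrix.of fun (i : Fin M) (a : Fin N) => p i a) 0 := by
    ext i j
    rcases i with a | i <;> rcases j with b | j <;>
      simp [Matrix.diagonal_apply]
  rw [h1, h2, capelliAux_det_diagonal_add]
  have key : ∀ (A : Finset (Fin M)) (B : Finset (Fin N)),
      (∏ i ∈ (B.disjSum A)ᶜ, Sum.elim (fun a => u - z a) (fun i => pu - lam i) i) *
        Matrix.det ((Matrix.fromBlocks 0 (Matrix.of fun (a : Fin N) (i : Fin M) => x i a)
            (Matrix.of fun (i : Fin M) (a : Fin N) => p i a) 0).submatrix
          (fun a : ↥(B.disjSum A) => (a : Fin N ⊕ Fin M))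
          (fun a : ↥(B.disjSum A) => (a : Fin N ⊕ Fin M))) =
      (if h : B.card = A.card then
        (-1) ^ A.card * (∏ a ∈ Bᶜ, (u - z a)) * (∏ b ∈ Aᶜ, (pu - lam b)) *
          Matrix.det (Matrix.of fun i j : Fin A.card =>
            x (A.orderEmbOfFin rfl i) (B.orderEmbOfFin h j)) *
          Matrix.det (Matrix.of fun i j : Fin A.card =>
            p (A.orderEmbOfFin rfl i) (B.orderEmbOfFin h j))
      else 0) := by
    intro A B
    have hprod : (∏ i ∈ (B.disjSum A)ᶜ,
          Sum.elim (fun a => u - z a) (fun i => pu - lam i) i) =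
        (∏ a ∈ Bᶜ, (u - z a)) * ∏ b ∈ Aᶜ, (pu - lam b) := by
      rw [capelliAux_compl_disjSum, capelliAux_prod_disjSum]
      rfl
    have hsub : Matrix.det ((Matrix.fromBlocks 0
            (Matrix.of fun (a : Fin N) (i : Fin M) => x i a)
            (Matrix.of fun (i : Fin M) (a : Fin N) => p i a) 0).submatrix
          (fun a : ↥(B.disjSum A) => (a : Fin N ⊕ Fin M))
          (fun a : ↥(B.disjSum A) => (a : Fin N ⊕ Fin M))) =
        Matrix.det (Matrix.fromBlocks (0 : Matrix ↥B ↥B K)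
          (Matrix.of fun (b : ↥B) (a : ↥A) => x (a : Fin M) (b : Fin N))
          (Matrix.of fun (a : ↥A) (b : ↥B) => p (a : Fin M) (b : Fin N))
          (0 : Matrix ↥A ↥A K)) := by
      rw [← Matrix.det_submatrix_equiv_self (capelliAux_disjSumEquiv B A)]
      congr 1
      ext i j
      rcases i with b | a <;> rcases j with b' | a' <;> rfl
    by_cases h : B.card = A.card
    · rw [dif_pos h, hprod, hsub,
        ← Matrix.det_submatrix_equiv_self
          (Equiv.sumCongr (B.orderIsoOfFin h).toEquiv (A.orderIsoOfFin rfl).toEquiv)]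
      have hsub2 : (Matrix.fromBlocks (0 : Matrix ↥B ↥B K)
            (Matrix.of fun (b : ↥B) (a : ↥A) => x (a : Fin M) (b : Fin N))
            (Matrix.of fun (a : ↥A) (b : ↥B) => p (a : Fin M) (b : Fin N))
            (0 : Matrix ↥A ↥A K)).submatrix
            (Equiv.sumCongr (B.orderIsoOfFin h).toEquiv (A.orderIsoOfFin rfl).toEquiv)
            (Equiv.sumCongr (B.orderIsoOfFin h).toEquiv (A.orderIsoOfFin rfl).toEquiv) =
          Matrix.fromBlocks (0 : Matrix (Fin A.card) (Fin A.card) K)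
            (Matrix.of fun i j : Fin A.card =>
              x (A.orderEmbOfFin rfl j) (B.orderEmbOfFin h i))
            (Matrix.of fun i j : Fin A.card =>
              p (A.orderEmbOfFin rfl i) (B.orderEmbOfFin h j))
            (0 : Matrix (Fin A.card) (Fin A.card) K) := by
        ext i j
        rcases i with i | i <;> rcases j with j | j <;> rfl
      rw [hsub2, capelliAux_det_offdiag]
      have hx : Matrix.det (Matrix.of fun i j : Fin A.card =>
            x (A.orderEmbOfFin rfl j) (B.orderEmbOfFin h i)) =
          Matrix.det (Matrix.of fun i j : Fin A.card =>
            x (A.orderEmbOfFin rfl i) (B.orderEmbOfFin h j)) := by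
        rw [← Matrix.det_transpose]
        congr 1
      rw [hx]
      ring
    · rw [dif_neg h, hprod, hsub, capelliAux_det_offdiag_zero, mul_zero]
      simpa [Fintype.card_coe] using h
  calc (∑ S : Finset (Fin N ⊕ Fin M),
        (∏ i ∈ Sᶜ, Sum.elim (fun a => u - z a) (fun i => pu - lam i) i) *
          Matrix.det ((Matrix.fromBlocks 0 (Matrix.of fun (a : Fin N) (i : Fin M) => x i a)
              (Matrix.of fun (i : Fin M) (a : Fin N) => p i a) 0).submatrix
            (fun a : ↥S => (a : Fin N ⊕ Fin M)) (fun a : ↥S => (a : Fin N ⊕ Fin M))))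
      = ∑ P : Finset (Fin N) × Finset (Fin M),
          (∏ i ∈ (P.1.disjSum P.2)ᶜ,
            Sum.elim (fun a => u - z a) (fun i => pu - lam i) i) *
          Matrix.det ((Matrix.fromBlocks 0 (Matrix.of fun (a : Fin N) (i : Fin M) => x i a)
              (Matrix.of fun (i : Fin M) (a : Fin N) => p i a) 0).submatrix
            (fun a : ↥(P.1.disjSum P.2) => (a : Fin N ⊕ Fin M))
            (fun a : ↥(P.1.disjSum P.2) => (a : Fin N ⊕ Fin M))) := by
        exact (Fintype.sum_equiv (capelliAux_finsetSumEquiv (Fin N) (Fin M)) _ _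
          fun P => rfl).symm
    _ = ∑ B : Finset (Fin N), ∑ A : Finset (Fin M),
          (∏ i ∈ (B.disjSum A)ᶜ,
            Sum.elim (fun a => u - z a) (fun i => pu - lam i) i) *
          Matrix.det ((Matrix.fromBlocks 0 (Matrix.of fun (a : Fin N) (i : Fin M) => x i a)
              (Matrix.of fun (i : Fin M) (a : Fin N) => p i a) 0).submatrix
            (fun a : ↥(B.disjSum A) => (a : Fin N ⊕ Fin M))
            (fun a : ↥(B.disjSum A) => (a : Fin N ⊕ Fin M))) := by
        exact Fintype.sum_prod_type (f := fun P : Finset (Fin N) × Finset (Fin M) =>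
          (∏ i ∈ (P.1.disjSum P.2)ᶜ,
            Sum.elim (fun a => u - z a) (fun i => pu - lam i) i) *
          Matrix.det ((Matrix.fromBlocks 0 (Matrix.of fun (a : Fin N) (i : Fin M) => x i a)
              (Matrix.of fun (i : Fin M) (a : Fin N) => p i a) 0).submatrix
            (fun a : ↥(P.1.disjSum P.2) => (a : Fin N ⊕ Fin M))
            (fun a : ↥(P.1.disjSum P.2) => (a : Fin N ⊕ Fin M))))
    _ = ∑ B : Finset (Fin N), ∑ A : Finset (Fin M),
          (if h : B.card = A.card then
            (-1) ^ A.card * (∏ a ∈ Bᶜ, (u - z a)) * (∏ b ∈ Aᶜ, (pu - lam b)) *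
              Matrix.det (Matrix.of fun i j : Fin A.card =>
                x (A.orderEmbOfFin rfl i) (B.orderEmbOfFin h j)) *
              Matrix.det (Matrix.of fun i j : Fin A.card =>
                p (A.orderEmbOfFin rfl i) (B.orderEmbOfFin h j))
          else 0) := by
        refine Finset.sum_congr rfl fun B _ => Finset.sum_congr rfl fun A _ => ?_
        exact key A B
    _ = _ := Finset.sum_comm
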